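/- Let S be a numerical semigroup with |Ap_2| = 3 and |C_3| ≥ 4. Then there exist two distinct minimal generators n_i, n_j of S, both different from the multiplicity e, such that C_2 = Ap_2 = {2n_i, n_i + n_j, 2n_j} and C_3 = {3n_i, 2n_i + n_j, n_i + 2n_j, 3n_j}. -/
import Mathlib


open Set

/-- A numerical semigroup: a cofinite submonoid of ℕ. -/
def IsNumSgp (S : Set ℕ) : Prop :=
  0 ∈ S ∧ (∀ a ∈ S, ∀ b ∈ S, a + b ∈ S) ∧ Sᶜ.Finite

/-- The maximal ideal `M = S \ {0}`. -/
def MS (S : Set ℕ) : Set ℕ := S \ {0}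

/-- The multiplicity `e` of `S`, the smallest nonzero element. -/
noncomputable def mult (S : Set ℕ) : ℕ := sInf (MS S)

/-- `nM S h` is the set of sums of `h` elements of `M = S \ {0}` (with `nM S 0 = {0}`). -/
def nM (S : Set ℕ) : ℕ → Set ℕ
  | 0 => {0}
  | k + 1 => {x | ∃ a ∈ MS S, ∃ b ∈ nM S k, x = a + b}

/-- The order of `s`: the largest `h` with `s ∈ hM`. -/
noncomputable def ordS (S : Set ℕ) (s : ℕ) : ℕ := sSup {h | s ∈ nM S h}

/-- The Apéry set of `S` with respect to the multiplicity `e`: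
elements `s ∈ S` with `s - e ∉ S`. -/
def Ap (S : Set ℕ) : Set ℕ := {s ∈ S | ∀ t ∈ S, t + mult S ≠ s}

/-- Elements of the Apéry set of order `k`. -/
def ApK (S : Set ℕ) (k : ℕ) : Set ℕ := {s ∈ Ap S | ordS S s = k}

/-- `C_k = {s ∈ S : ord s = k and s - e ∉ (k-1)M}`. -/
def CK (S : Set ℕ) (k : ℕ) : Set ℕ :=
  {s ∈ S | ordS S s = k ∧ ∀ t ∈ nM S (k - 1), t + mult S ≠ s}

/-- `D_k = {s ∈ S : ord s = k-1 and ord (s+e) > k}`. -/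
def DK (S : Set ℕ) (k : ℕ) : Set ℕ :=
  {s ∈ S | ordS S s = k - 1 ∧ k < ordS S (s + mult S)}

/-- The Hilbert function of `R = k[[S]]`: `H(0) = 1`, `H(n) = |nM \ (n+1)M|`. -/
noncomputable def HF (S : Set ℕ) (n : ℕ) : ℕ := (nM S n \ nM S (n + 1)).ncard

/-- The set of minimal generators of `S`. -/
def MinGens (S : Set ℕ) : Set ℕ :=
  MS S \ {x | ∃ a ∈ MS S, ∃ b ∈ MS S, x = a + b}

/-- `a` is a maximal representation of `s`: a finitely supported coefficient
function on the minimal generators with `Σ aⱼ nⱼ = s` and `Σ aⱼ = ord s`. -/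
def IsMaxRep (S : Set ℕ) (s : ℕ) (a : ℕ →₀ ℕ) : Prop :=
  (↑a.support : Set ℕ) ⊆ MinGens S ∧
  (a.sum fun n c => c * n) = s ∧
  (a.sum fun _ c => c) = ordS S s

/-- `|Supp(s)|`: the maximal number of distinct minimal generators appearing
in a maximal representation of `s`. -/
noncomputable def SuppCard (S : Set ℕ) (s : ℕ) : ℕ :=
  sSup {q | ∃ a : ℕ →₀ ℕ, IsMaxRep S s a ∧ a.support.card = q}

/-- The Frobenius number of `S`. -/
noncomputable def Frob (S : Set ℕ) : ℕ := sSup Sᶜ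

section NumSgpAux

variable {S : Set ℕ}

lemma nsg_MS_nonempty (hS : IsNumSgp S) : (MS S).Nonempty := by
  have h1 : S.Infinite := by
    have := hS.2.2.infinite_compl
    simpa using this
  exact (h1.diff (Set.finite_singleton 0)).nonempty

lemma nsg_mult_mem (hS : IsNumSgp S) : mult S ∈ MS S := Nat.sInf_mem (nsg_MS_nonempty hS)

lemma nsg_mult_pos (hS : IsNumSgp S) : 0 < mult S := by
  have h := nsg_mult_mem hS
  have h0 : mult S ≠ 0 := by
    intro h0
    exact h.2 (by simp [h0])
  omega

lemma nsg_mult_le {a : ℕ} (ha : a ∈ MS S) : mult S ≤ a := Nat.sInf_le ha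

lemma nsg_MS_add (hS : IsNumSgp S) {a b : ℕ} (ha : a ∈ MS S) (hb : b ∈ MS S) :
    a + b ∈ MS S := by
  refine ⟨hS.2.1 a ha.1 b hb.1, ?_⟩
  have := ha.2
  simp only [Set.mem_singleton_iff] at this ⊢
  omega

lemma nsg_nM_one : nM S 1 = MS S := by
  ext x
  constructor
  · rintro ⟨a, ha, b, hb, rfl⟩
    have hb0 : b = 0 := hb
    simpa [hb0] using ha
  · intro hx
    exact ⟨x, hx, 0, rfl, by simp⟩

lemma nsg_nM_subset (hS : IsNumSgp S) : ∀ k, nM S k ⊆ S := by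
  intro k
  induction k with
  | zero =>
      intro x hx
      have : x = 0 := hx
      rw [this]; exact hS.1
  | succ k ih =>
      rintro x ⟨a, ha, b, hb, rfl⟩
      exact hS.2.1 a ha.1 b (ih hb)

lemma nsg_nM_le (hS : IsNumSgp S) : ∀ k, ∀ x ∈ nM S k, k * mult S ≤ x := by
  intro k
  induction k with
  | zero => simp
  | succ k ih =>
      rintro x ⟨a, ha, b, hb, rfl⟩
      have h1 := nsg_mult_le ha
      have h2 := ih b hb
      have h3 : (k+1) * mult S = k * mult S + mult S := by ring
      omega

lemma nsg_nM_add : ∀ (h : ℕ) {k x y : ℕ}, x ∈ nM S h → y ∈ nM S k → x + y ∈ nM S (h + k) := by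
  intro h
  induction h with
  | zero =>
      intro k x y hx hy
      have : x = 0 := hx
      subst this
      simpa using hy
  | succ h ih =>
      intro k x y hx hy
      obtain ⟨a, ha, b, hb, rfl⟩ := hx
      have hmem := ih hb hy
      have heq : h + 1 + k = (h + k) + 1 := by omega
      rw [heq]
      exact ⟨a, ha, b + y, hmem, by ring⟩

lemma nsg_bdd (hS : IsNumSgp S) (s : ℕ) : BddAbove {h | s ∈ nM S h} := by
  refine ⟨s, fun h hh => ?_⟩
  have h1 := nsg_nM_le hS h s hh
  have h2 := nsg_mult_pos hS
  have h3 : h ≤ h * mult S := Nat.le_mul_of_pos_right h h2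
  omega

lemma nsg_ord_ge (hS : IsNumSgp S) {s k : ℕ} (h : s ∈ nM S k) : k ≤ ordS S s :=
  le_csSup (nsg_bdd hS s) h

lemma nsg_mem_ord (hS : IsNumSgp S) {s k : ℕ} (h : s ∈ nM S k) : s ∈ nM S (ordS S s) := by
  have hmem := Nat.sSup_mem (⟨k, h⟩ : Set.Nonempty {h' | s ∈ nM S h'}) (nsg_bdd hS s)
  exact hmem

/-- The engine: any 3-part decomposition of an element of `C₃` has its pairwise
sums in `Ap₂`. -/
lemma nsg_eng (hS : IsNumSgp S) {s p q r : ℕ} (hs : s ∈ CK S 3)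
    (hp : p ∈ MS S) (hq : q ∈ MS S) (hr : r ∈ MS S) (hsum : s = p + q + r) :
    p + q ∈ ApK S 2 := by
  obtain ⟨hsS, hord, hC⟩ := hs
  have hp1 : p ∈ nM S 1 := nsg_nM_one ▸ hp
  have hq1 : q ∈ nM S 1 := nsg_nM_one ▸ hq
  have hr1 : r ∈ nM S 1 := nsg_nM_one ▸ hr
  have hpq2 : p + q ∈ nM S 2 := nsg_nM_add 1 hp1 hq1
  have hge : 2 ≤ ordS S (p+q) := nsg_ord_ge hS hpq2
  have hmem := nsg_mem_ord hS hpq2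
  have hle : ordS S (p+q) ≤ 2 := by
    by_contra hgt
    push_neg at hgt
    have h4 : s ∈ nM S (ordS S (p+q) + 1) := by
      rw [hsum]
      exact nsg_nM_add _ hmem hr1
    have := nsg_ord_ge hS h4
    omega
  refine ⟨⟨nsg_nM_subset hS 2 hpq2, ?_⟩, by omega⟩
  intro t ht heq
  rcases Nat.eq_zero_or_pos t with rfl | htpos
  · have := nsg_mult_le hp
    have := nsg_mult_le hq
    have := nsg_mult_pos hS
    omega
  · have ht' : t ∈ MS S := ⟨ht, by simp; omega⟩
    have h2' : t + r ∈ nM S 2 := nsg_nM_add 1 (nsg_nM_one ▸ ht') hr1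
    exact hC (t + r) h2' (by omega)

lemma nsg_engNe (hS : IsNumSgp S) {s p q r : ℕ} (hs : s ∈ CK S 3)
    (hq : q ∈ MS S) (hr : r ∈ MS S) (hsum : s = p + q + r) : p ≠ mult S := by
  obtain ⟨hsS, hord, hC⟩ := hs
  rintro rfl
  have h2' : q + r ∈ nM S 2 := nsg_nM_add 1 (nsg_nM_one ▸ hq) (nsg_nM_one ▸ hr)
  exact hC (q + r) h2' (by omega)

lemma nsg_engGen (hS : IsNumSgp S) {s p q r : ℕ} (hs : s ∈ CK S 3)
    (hp : p ∈ MS S) (hq : q ∈ MS S) (hr : r ∈ MS S) (hsum : s = p + q + r) :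
    p ∈ MinGens S := by
  refine ⟨hp, ?_⟩
  rintro ⟨a, ha, b, hb, heq⟩
  obtain ⟨hsS, hord, hC⟩ := hs
  have ha1 : a ∈ nM S 1 := nsg_nM_one ▸ ha
  have hb1 : b ∈ nM S 1 := nsg_nM_one ▸ hb
  have hq1 : q ∈ nM S 1 := nsg_nM_one ▸ hq
  have hr1 : r ∈ nM S 1 := nsg_nM_one ▸ hr
  have h4 : s ∈ nM S 4 := by
    rw [hsum, heq]
    exact nsg_nM_add 3 (nsg_nM_add 2 (nsg_nM_add 1 ha1 hb1) hq1) hr1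
  have := nsg_ord_ge hS h4
  omega

lemma nsg_decomp3 (hS : IsNumSgp S) {s : ℕ} (hs : s ∈ CK S 3) :
    ∃ p q r, p ∈ MS S ∧ q ∈ MS S ∧ r ∈ MS S ∧ s = p + q + r := by
  obtain ⟨hsS, hord, -⟩ := hs
  have hne : {h | s ∈ nM S h}.Nonempty := by
    by_contra h
    rw [Set.not_nonempty_iff_eq_empty] at h
    have h0 : ordS S s = 0 := by
      unfold ordS
      rw [h]
      simpa using csSup_empty
    omega
  have h3 : s ∈ nM S 3 := by
    have hmem := Nat.sSup_mem hne (nsg_bdd hS s)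
    have : ordS S s ∈ {h | s ∈ nM S h} := hmem
    rw [hord] at this
    exact this
  obtain ⟨p, hp, b, hb, hb1⟩ := h3
  obtain ⟨q, hq, c, hc, hc1⟩ := hb
  have hcMS : c ∈ MS S := nsg_nM_one ▸ hc
  exact ⟨p, q, c, hp, hq, hcMS, by omega⟩

lemma nsg_CK2_eq (hS : IsNumSgp S) : CK S 2 = ApK S 2 := by
  ext s
  constructor
  · rintro ⟨hsS, hord, hC⟩
    refine ⟨⟨hsS, ?_⟩, hord⟩
    intro t ht heq
    rcases Nat.eq_zero_or_pos t with rfl | hpos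
    · have he1 : mult S ∈ nM S 1 := nsg_nM_one ▸ nsg_mult_mem hS
      have hge := nsg_ord_ge hS he1
      have hle : ordS S (mult S) ≤ 1 := by
        by_contra hgt
        push_neg at hgt
        have hmem := nsg_mem_ord hS he1
        have h1 := nsg_nM_le hS _ _ hmem
        have h2 : 2 * mult S ≤ ordS S (mult S) * mult S :=
          Nat.mul_le_mul_right _ hgt
        have := nsg_mult_pos hS
        omega
      have hse : s = mult S := by omega
      rw [hse] at hord
      omega
    · have ht' : t ∈ MS S := ⟨ht, by simp; omega⟩
      exact hC t (nsg_nM_one ▸ ht') heq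
  · rintro ⟨⟨hsS, hA⟩, hord⟩
    exact ⟨hsS, hord, fun t ht => hA t (nsg_nM_subset hS 1 ht)⟩

lemma nsg_card3le (a b c : ℕ) : ({a, b, c} : Set ℕ).ncard ≤ 3 := by
  have h1 := Set.ncard_insert_le a ({b, c} : Set ℕ)
  have h2 := Set.ncard_insert_le b ({c} : Set ℕ)
  have h3 : ({c} : Set ℕ).ncard = 1 := Set.ncard_singleton c
  omega

lemma nsg_card4le (a b c d : ℕ) : ({a, b, c, d} : Set ℕ).ncard ≤ 4 := by
  have h1 := Set.ncard_insert_le a ({b, c, d} : Set ℕ)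
  have h2 := nsg_card3le b c d
  omega

lemma nsg_three_aux {A : Set ℕ} (h : A.ncard = 3) {x y : ℕ} (hx : x ∈ A) (hy : y ∈ A)
    (hxy : x ≠ y) : ∃ z, A = {x, y, z} ∧ z ≠ x ∧ z ≠ y := by
  obtain ⟨a, b, c, hab, hac, hbc, rfl⟩ := Set.ncard_eq_three.mp h
  simp only [Set.mem_insert_iff, Set.mem_singleton_iff] at hx hy
  rcases hx with rfl | rfl | rfl <;> rcases hy with rfl | rfl | rfl
  · exact absurd rfl hxy
  · exact ⟨c, rfl, hac.symm, hbc.symm⟩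
  · exact ⟨b, by ext t; simp; tauto, hab.symm, hbc⟩
  · exact ⟨c, by ext t; simp; tauto, hbc.symm, hac.symm⟩
  · exact absurd rfl hxy
  · exact ⟨a, by ext t; simp; tauto, hab, hac⟩
  · exact ⟨b, by ext t; simp; tauto, hbc, hab.symm⟩
  · exact ⟨a, by ext t; simp; tauto, hac, hab⟩
  · exact absurd rfl hxy

lemma nsg_sum3 {x1 x2 x3 p q r : ℕ} (h : ({x1, x2, x3} : Set ℕ) = {p, q, r})
    (h12 : x1 ≠ x2) (h13 : x1 ≠ x3) (h23 : x2 ≠ x3) :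
    x1 + x2 + x3 = p + q + r := by
  have m1 : x1 ∈ ({p, q, r} : Set ℕ) := h ▸ (by simp)
  have m2 : x2 ∈ ({p, q, r} : Set ℕ) := h ▸ (by simp)
  have m3 : x3 ∈ ({p, q, r} : Set ℕ) := h ▸ (by simp)
  have mp : p ∈ ({x1, x2, x3} : Set ℕ) := h.symm ▸ (by simp : p ∈ ({p,q,r} : Set ℕ))
  have mq : q ∈ ({x1, x2, x3} : Set ℕ) := h.symm ▸ (by simp : q ∈ ({p,q,r} : Set ℕ))
  have mr : r ∈ ({x1, x2, x3} : Set ℕ) := h.symm ▸ (by simp : r ∈ ({p,q,r} : Set ℕ))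
  simp only [Set.mem_insert_iff, Set.mem_singleton_iff] at m1 m2 m3 mp mq mr
  rcases m1 with h1 | h1 | h1 <;> rcases m2 with hh2 | hh2 | hh2 <;>
    rcases m3 with hh3 | hh3 | hh3 <;> omega

end NumSgpAux
theorem stmt13 (S : Set ℕ) (hS : IsNumSgp S) (h2 : (ApK S 2).ncard = 3)
    (h3 : 4 ≤ (CK S 3).ncard) :
    ∃ ni ∈ MinGens S, ∃ nj ∈ MinGens S, ni ≠ nj ∧ ni ≠ mult S ∧ nj ≠ mult S ∧
      CK S 2 = ApK S 2 ∧
      CK S 2 = {2 * ni, ni + nj, 2 * nj} ∧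
      CK S 3 = {3 * ni, 2 * ni + nj, ni + 2 * nj, 3 * nj} := by
  have hCK2 := nsg_CK2_eq hS
  have hA2fin : (ApK S 2).Finite := by
    obtain ⟨p, q, r, -, -, -, hA⟩ := Set.ncard_eq_three.mp h2
    rw [hA]; exact Set.toFinite _
  have hC3ne : (CK S 3).Nonempty := Set.nonempty_of_ncard_ne_zero (by omega)
  by_cases hdist : ∃ s ∈ CK S 3, ∃ p q r, p ∈ MS S ∧ q ∈ MS S ∧ r ∈ MS S ∧
      s = p + q + r ∧ p ≠ q ∧ p ≠ r ∧ q ≠ r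
  · -- Case I : some element of C₃ has a decomposition with three distinct parts.
    exfalso
    obtain ⟨st, hst, a, b, c, ha, hb, hc, hseq, hab, hac, hbc⟩ := hdist
    have hab2 : a + b ∈ ApK S 2 := nsg_eng hS hst ha hb hc hseq
    have hac2 : a + c ∈ ApK S 2 := nsg_eng hS hst ha hc hb (by omega)
    have hbc2 : b + c ∈ ApK S 2 := nsg_eng hS hst hb hc ha (by omega)
    have hsub : ({a+b, a+c, b+c} : Set ℕ) ⊆ ApK S 2 := by
      intro x hx
      simp only [Set.mem_insert_iff, Set.mem_singleton_iff] at hx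
      rcases hx with rfl | rfl | rfl <;> assumption
    have hcard : ({a+b, a+c, b+c} : Set ℕ).ncard = 3 :=
      Set.ncard_eq_three.mpr ⟨_, _, _, by omega, by omega, by omega, rfl⟩
    have hA2eq : ApK S 2 = {a+b, a+c, b+c} :=
      (Set.eq_of_subset_of_ncard_le hsub (le_of_eq (h2.trans hcard.symm)) hA2fin).symm
    have memA2 : ∀ y, y ∈ ApK S 2 ↔ (y = a+b ∨ y = a+c ∨ y = b+c) := by
      intro y; rw [hA2eq]; simp
    -- any "doubled" decomposition (x,x,z) of an element of C₃ forces st = 3x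
    have key : ∀ s ∈ CK S 3, ∀ x z, x ∈ MS S → z ∈ MS S → s = x + x + z →
        st = x + x + x := by
      intro s hs x z hx hz hseq'
      have hx2 : x + x ∈ ApK S 2 := nsg_eng hS hs hx hx hz hseq'
      rcases (memA2 _).mp hx2 with h1 | h1 | h1
      · have hxc : x + c ∈ ApK S 2 := nsg_eng hS hst hx hc hx (by omega)
        rcases (memA2 _).mp hxc with hh | hh | hh <;> omega
      · have hxb : x + b ∈ ApK S 2 := nsg_eng hS hst hx hb hx (by omega)
        rcases (memA2 _).mp hxb with hh | hh | hh <;> omega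
      · have hxa : x + a ∈ ApK S 2 := nsg_eng hS hst hx ha hx (by omega)
        rcases (memA2 _).mp hxa with hh | hh | hh <;> omega
    by_cases hrep : ∃ s ∈ CK S 3, ∃ x z, x ∈ MS S ∧ z ∈ MS S ∧ s = x + x + z
    · obtain ⟨s0, hs0, x0, z0, hx0, hz0, hs0eq⟩ := hrep
      have hx03 : st = x0 + x0 + x0 := key s0 hs0 x0 z0 hx0 hz0 hs0eq
      have hx02 : x0 + x0 ∈ ApK S 2 := nsg_eng hS hs0 hx0 hx0 hz0 hs0eq
      have hsubC3 : CK S 3 ⊆ {x0 + (a+b), x0 + (a+c), x0 + (b+c)} := by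
        intro s hs
        obtain ⟨p, q, r, hp, hq, hr, hsum⟩ := nsg_decomp3 hS hs
        simp only [Set.mem_insert_iff, Set.mem_singleton_iff]
        by_cases hpq : p = q
        · have h3x : st = p + p + p := key s hs p r hp hr (by omega)
          have hpr2 : p + r ∈ ApK S 2 := nsg_eng hS hs hp hr hp (by omega)
          rcases (memA2 _).mp hpr2 with hh | hh | hh <;> omega
        · by_cases hpr : p = r
          · have h3x : st = p + p + p := key s hs p q hp hq (by omega)
            have hpq2 : p + q ∈ ApK S 2 := nsg_eng hS hs hp hq hp (by omega)
            rcases (memA2 _).mp hpq2 with hh | hh | hh <;> omega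
          · by_cases hqr : q = r
            · have h3x : st = q + q + q := key s hs q p hq hp (by omega)
              have hqp2 : q + p ∈ ApK S 2 := nsg_eng hS hs hq hp hq (by omega)
              rcases (memA2 _).mp hqp2 with hh | hh | hh <;> omega
            · have hh1 : p + q ∈ ApK S 2 := nsg_eng hS hs hp hq hr hsum
              have hh2 : p + r ∈ ApK S 2 := nsg_eng hS hs hp hr hq (by omega)
              have hh3 : q + r ∈ ApK S 2 := nsg_eng hS hs hq hr hp (by omega)
              have hsub2 : ({p+q, p+r, q+r} : Set ℕ) ⊆ ApK S 2 := by
                intro x hx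
                simp only [Set.mem_insert_iff, Set.mem_singleton_iff] at hx
                rcases hx with rfl | rfl | rfl <;> assumption
              have hcard2 : ({p+q, p+r, q+r} : Set ℕ).ncard = 3 :=
                Set.ncard_eq_three.mpr ⟨_, _, _, by omega, by omega, by omega, rfl⟩
              have heq2 : ({p+q, p+r, q+r} : Set ℕ) = {a+b, a+c, b+c} := by
                rw [← hA2eq]
                exact Set.eq_of_subset_of_ncard_le hsub2
                  (le_of_eq (h2.trans hcard2.symm)) hA2fin
              have hsum3 := nsg_sum3 heq2 (by omega) (by omega) (by omega)
              rcases (memA2 _).mp hx02 with hh | hh | hh <;> omega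
      have hle := Set.ncard_le_ncard hsubC3 (Set.toFinite _)
      have := nsg_card3le (x0 + (a+b)) (x0 + (a+c)) (x0 + (b+c))
      omega
    · have hsubst : CK S 3 ⊆ {st} := by
        intro s hs
        obtain ⟨p, q, r, hp, hq, hr, hsum⟩ := nsg_decomp3 hS hs
        have hpq : p ≠ q := fun h => hrep ⟨s, hs, p, r, hp, hr, by omega⟩
        have hpr : p ≠ r := fun h => hrep ⟨s, hs, p, q, hp, hq, by omega⟩
        have hqr : q ≠ r := fun h => hrep ⟨s, hs, q, p, hq, hp, by omega⟩
        have hh1 : p + q ∈ ApK S 2 := nsg_eng hS hs hp hq hr hsum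
        have hh2 : p + r ∈ ApK S 2 := nsg_eng hS hs hp hr hq (by omega)
        have hh3 : q + r ∈ ApK S 2 := nsg_eng hS hs hq hr hp (by omega)
        have hsub2 : ({p+q, p+r, q+r} : Set ℕ) ⊆ ApK S 2 := by
          intro x hx
          simp only [Set.mem_insert_iff, Set.mem_singleton_iff] at hx
          rcases hx with rfl | rfl | rfl <;> assumption
        have hcard2 : ({p+q, p+r, q+r} : Set ℕ).ncard = 3 :=
          Set.ncard_eq_three.mpr ⟨_, _, _, by omega, by omega, by omega, rfl⟩
        have heq2 : ({p+q, p+r, q+r} : Set ℕ) = {a+b, a+c, b+c} := by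
          rw [← hA2eq]
          exact Set.eq_of_subset_of_ncard_le hsub2
            (le_of_eq (h2.trans hcard2.symm)) hA2fin
        have hsum3 := nsg_sum3 heq2 (by omega) (by omega) (by omega)
        simp only [Set.mem_singleton_iff]
        omega
      have hle := Set.ncard_le_ncard hsubst (Set.toFinite _)
      have := Set.ncard_singleton st
      omega
  · -- Case II : every decomposition of every element of C₃ has a repeated part.
    have rep2 : ∀ s ∈ CK S 3, ∃ x z, x ∈ MS S ∧ z ∈ MS S ∧ s = x + x + z := by
      intro s hs
      obtain ⟨p, q, r, hp, hq, hr, hsum⟩ := nsg_decomp3 hS hs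
      by_cases h1 : p = q
      · exact ⟨p, r, hp, hr, by omega⟩
      by_cases hh2 : p = r
      · exact ⟨p, q, hp, hq, by omega⟩
      by_cases hh3 : q = r
      · exact ⟨q, p, hq, hp, by omega⟩
      exact absurd ⟨s, hs, p, q, r, hp, hq, hr, hsum, h1, hh2, hh3⟩ hdist
    obtain ⟨s1, hs1⟩ := hC3ne
    obtain ⟨u, zu, hu, hzu, hs1eq⟩ := rep2 s1 hs1
    by_cases hexv : ∃ s ∈ CK S 3, ∃ x z, x ∈ MS S ∧ z ∈ MS S ∧ s = x + x + z ∧ x ≠ u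
    · obtain ⟨s2, hs2, v, zv, hv, hzv, hs2eq, hvu⟩ := hexv
      have h2u : u + u ∈ ApK S 2 := nsg_eng hS hs1 hu hu hzu hs1eq
      have h2v : v + v ∈ ApK S 2 := nsg_eng hS hs2 hv hv hzv hs2eq
      obtain ⟨c, hA2eq, hcu, hcv⟩ := nsg_three_aux h2 h2u h2v (by omega)
      have memA2 : ∀ y, y ∈ ApK S 2 ↔ (y = u+u ∨ y = v+v ∨ y = c) := by
        intro y; rw [hA2eq]; simp
      -- Step 1 : no doubled element has its double equal to c.
      have step1 : ∀ s ∈ CK S 3, ∀ x z, x ∈ MS S → z ∈ MS S → s = x + x + z →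
          x + x ≠ c := by
        rintro sw hsw w zw hw hzw hsweq hwc
        have memA2w : ∀ y, y ∈ ApK S 2 ↔ (y = u+u ∨ y = v+v ∨ y = w+w) := by
          intro y; rw [memA2 y, hwc]
        have hww : w + w ∈ ApK S 2 := (memA2w _).mpr (Or.inr (Or.inr rfl))
        have hd_uw : u ≠ w := fun h => hcu (by omega)
        have hd_vw : v ≠ w := fun h => hcv (by omega)
        have L1 : ∀ p q r zr sr, p ∈ MS S → q ∈ MS S → r ∈ MS S → zr ∈ MS S →
            sr ∈ CK S 3 → sr = r + r + zr → p + q = r + r →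
            (∀ y, y ∈ ApK S 2 ↔ (y = p+p ∨ y = q+q ∨ y = r+r)) →
            p ≠ q → p ≠ r → q ≠ r → False := by
          intro p q r zr sr hp hq hr hzr hsr hsreq hpq2 hmem hpq hpr hqr
          have hrz : r + zr ∈ ApK S 2 := nsg_eng hS hsr hr hzr hr (by omega)
          rcases (hmem _).mp hrz with h1 | h1 | h1
          · have hpr2 : p + r ∈ ApK S 2 := nsg_eng hS hsr hp hr hp (by omega)
            rcases (hmem _).mp hpr2 with hh | hh | hh <;> omega
          · have hqr2 : q + r ∈ ApK S 2 := nsg_eng hS hsr hq hr hq (by omega)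
            rcases (hmem _).mp hqr2 with hh | hh | hh <;> omega
          · have hpr2 : p + r ∈ ApK S 2 := nsg_eng hS hsr hp hr hq (by omega)
            rcases (hmem _).mp hpr2 with hh | hh | hh <;> omega
        by_cases hrel : u + v = w + w ∨ u + w = v + v ∨ v + w = u + u
        · rcases hrel with h | h | h
          · exact L1 u v w zw sw hu hv hw hzw hsw hsweq h memA2w
              (by omega) (by omega) (by omega)
          · exact L1 u w v zv s2 hu hw hv hzv hs2 hs2eq h
              (fun y => by rw [memA2w y]; tauto) (by omega) (by omega) (by omega)
          · exact L1 v w u zu s1 hv hw hu hzu hs1 hs1eq h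
              (fun y => by rw [memA2w y]; tauto) (by omega) (by omega) (by omega)
        · push_neg at hrel
          obtain ⟨hr1, hr2, hr3⟩ := hrel
          have hsub : CK S 3 ⊆ {u+u+u, v+v+v, w+w+w} := by
            intro s hs
            obtain ⟨x, z, hx, hz, hseq⟩ := rep2 s hs
            have hx2 : x + x ∈ ApK S 2 := nsg_eng hS hs hx hx hz hseq
            have hxz : x + z ∈ ApK S 2 := nsg_eng hS hs hx hz hx (by omega)
            simp only [Set.mem_insert_iff, Set.mem_singleton_iff]
            rcases (memA2w _).mp hx2 with h1 | h1 | h1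
            · rcases (memA2w _).mp hxz with hA | hA | hA
              · omega
              · have hxv : x + v ∈ ApK S 2 := nsg_eng hS hs hx hv hv (by omega)
                rcases (memA2w _).mp hxv with hh | hh | hh <;> omega
              · have hxw : x + w ∈ ApK S 2 := nsg_eng hS hs hx hw hw (by omega)
                rcases (memA2w _).mp hxw with hh | hh | hh <;> omega
            · rcases (memA2w _).mp hxz with hA | hA | hA
              · have hxu : x + u ∈ ApK S 2 := nsg_eng hS hs hx hu hu (by omega)
                rcases (memA2w _).mp hxu with hh | hh | hh <;> omega
              · omega
              · have hxw : x + w ∈ ApK S 2 := nsg_eng hS hs hx hw hw (by omega)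
                rcases (memA2w _).mp hxw with hh | hh | hh <;> omega
            · rcases (memA2w _).mp hxz with hA | hA | hA
              · have hxu : x + u ∈ ApK S 2 := nsg_eng hS hs hx hu hu (by omega)
                rcases (memA2w _).mp hxu with hh | hh | hh <;> omega
              · have hxv : x + v ∈ ApK S 2 := nsg_eng hS hs hx hv hv (by omega)
                rcases (memA2w _).mp hxv with hh | hh | hh <;> omega
              · omega
          have hle := Set.ncard_le_ncard hsub (Set.toFinite _)
          have := nsg_card3le (u+u+u) (v+v+v) (w+w+w)
          omega
      by_cases huvc : u + v = c
      · -- the good case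
        have hsubT : CK S 3 ⊆ {u+u+u, u+u+v, u+v+v, v+v+v} := by
          intro s hs
          obtain ⟨x, z, hx, hz, hseq⟩ := rep2 s hs
          have hx2 : x + x ∈ ApK S 2 := nsg_eng hS hs hx hx hz hseq
          have hxz : x + z ∈ ApK S 2 := nsg_eng hS hs hx hz hx (by omega)
          have hx2c := step1 s hs x z hx hz hseq
          simp only [Set.mem_insert_iff, Set.mem_singleton_iff]
          rcases (memA2 _).mp hx2 with h1 | h1 | h1
          · rcases (memA2 _).mp hxz with hh | hh | hh <;> omega
          · rcases (memA2 _).mp hxz with hh | hh | hh <;> omega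
          · exact absurd h1 hx2c
        have hC3T : CK S 3 = {u+u+u, u+u+v, u+v+v, v+v+v} :=
          Set.eq_of_subset_of_ncard_le hsubT
            (le_trans (nsg_card4le _ _ _ _) h3) (Set.toFinite _)
        refine ⟨u, nsg_engGen hS hs1 hu hu hzu hs1eq,
                v, nsg_engGen hS hs2 hv hv hzv hs2eq,
                fun h => hvu h.symm,
                nsg_engNe hS hs1 hu hzu hs1eq,
                nsg_engNe hS hs2 hv hzv hs2eq,
                hCK2, ?_, ?_⟩
        · rw [hCK2, hA2eq]
          ext x
          simp only [Set.mem_insert_iff, Set.mem_singleton_iff]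
          omega
        · rw [hC3T]
          ext x
          simp only [Set.mem_insert_iff, Set.mem_singleton_iff]
          omega
      · -- u + v ≠ c : contradiction
        exfalso
        have hsubB : CK S 3 ⊆ {u+u+u, v+v+v, u+c, v+c} := by
          intro s hs
          obtain ⟨x, z, hx, hz, hseq⟩ := rep2 s hs
          have hx2 : x + x ∈ ApK S 2 := nsg_eng hS hs hx hx hz hseq
          have hxz : x + z ∈ ApK S 2 := nsg_eng hS hs hx hz hx (by omega)
          have hx2c := step1 s hs x z hx hz hseq
          simp only [Set.mem_insert_iff, Set.mem_singleton_iff]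
          rcases (memA2 _).mp hx2 with h1 | h1 | h1
          · rcases (memA2 _).mp hxz with hh | hh | hh
            · omega
            · have hxv : x + v ∈ ApK S 2 := nsg_eng hS hs hx hv hv (by omega)
              rcases (memA2 _).mp hxv with hh' | hh' | hh' <;> omega
            · omega
          · rcases (memA2 _).mp hxz with hh | hh | hh
            · have hxu : x + u ∈ ApK S 2 := nsg_eng hS hs hx hu hu (by omega)
              rcases (memA2 _).mp hxu with hh' | hh' | hh' <;> omega
            · omega
            · omega
          · exact absurd h1 hx2c
        have hC3B : CK S 3 = {u+u+u, v+v+v, u+c, v+c} :=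
          Set.eq_of_subset_of_ncard_le hsubB
            (le_trans (nsg_card4le _ _ _ _) h3) (Set.toFinite _)
        have hd1 : u + c ≠ v + v + v := by
          intro h
          have heq' : ({u+u+u, v+v+v, u+c, v+c} : Set ℕ) = {u+u+u, v+v+v, v+c} := by
            ext x
            simp only [Set.mem_insert_iff, Set.mem_singleton_iff]
            omega
          rw [hC3B, heq'] at h3
          have := nsg_card3le (u+u+u) (v+v+v) (v+c)
          omega
        have huc3 : u + c ∈ CK S 3 := by rw [hC3B]; simp
        have hvc3 : v + c ∈ CK S 3 := by rw [hC3B]; simp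
        obtain ⟨x', z', hx', hz', heq'⟩ := rep2 _ huc3
        have hx'2 : x' + x' ∈ ApK S 2 := nsg_eng hS huc3 hx' hx' hz' heq'
        have hx'z : x' + z' ∈ ApK S 2 := nsg_eng hS huc3 hx' hz' hx' (by omega)
        have hx'c := step1 _ huc3 x' z' hx' hz' heq'
        have hz'' : ∃ t, t ∈ MS S ∧ u + t = c := by
          rcases (memA2 _).mp hx'2 with h1 | h1 | h1
          · rcases (memA2 _).mp hx'z with hh | hh | hh
            · exact absurd (by omega : c = u + u) hcu
            · exfalso
              have hxv : x' + v ∈ ApK S 2 := nsg_eng hS huc3 hx' hv hv (by omega)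
              rcases (memA2 _).mp hxv with hh' | hh' | hh' <;> omega
            · exact ⟨z', hz', by omega⟩
          · rcases (memA2 _).mp hx'z with hh | hh | hh
            · exfalso
              have huv : u + v ∈ ApK S 2 := nsg_eng hS huc3 hu hv hu (by omega)
              rcases (memA2 _).mp huv with hh' | hh' | hh' <;> omega
            · exact absurd (by omega : u + c = v + v + v) hd1
            · exact absurd (by omega : u = v) (fun h => hvu h.symm)
          · exact absurd h1 hx'c
        obtain ⟨t, ht, hut⟩ := hz''
        have huv : u + v ∈ ApK S 2 := nsg_eng hS hvc3 hu hv ht (by omega)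
        rcases (memA2 _).mp huv with hh | hh | hh <;> omega
    · -- all doubled parts equal u : C₃ would have at most 3 elements.
      exfalso
      obtain ⟨p, q, r, hpq, hpr, hqr, hA2pqr⟩ := Set.ncard_eq_three.mp h2
      have hsub : CK S 3 ⊆ {u+p, u+q, u+r} := by
        intro s hs
        obtain ⟨x, z, hx, hz, hseq⟩ := rep2 s hs
        have hxu : x = u := by
          by_contra h
          exact hexv ⟨s, hs, x, z, hx, hz, hseq, h⟩
        subst hxu
        have hxz : x + z ∈ ApK S 2 := nsg_eng hS hs hx hz hx (by omega)
        rw [hA2pqr] at hxz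
        simp only [Set.mem_insert_iff, Set.mem_singleton_iff] at hxz
        simp only [Set.mem_insert_iff, Set.mem_singleton_iff]
        omega
      have hle := Set.ncard_le_ncard hsub (Set.toFinite _)
      have := nsg_card3le (u+p) (u+q) (u+r)
      omega
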